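/- Let f(x,y,z) = x³y + y³z + z³x over a finite field F_q of characteristic p ≠ 7 with 7 ∤ (q-1). Then the number of projective points on f = 0 over F_q is congruent to 1 modulo p. -/

import Mathlib

open Finset

section KleinAux

variable {F : Type*} [Field F] [Fintype F]

/-- The Klein quartic form. -/
def kleinKQ {F : Type*} [Field F] (v : Fin 3 → F) : F :=
  v 0 ^ 3 * v 1 + v 1 ^ 3 * v 2 + v 2 ^ 3 * v 0

omit [Fintype F] in
lemma kleinKQ_smul (c : F) (v : Fin 3 → F) : kleinKQ (c • v) = c ^ 4 * kleinKQ v := by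
  simp only [kleinKQ, Pi.smul_apply, smul_eq_mul]; ring

lemma klein_sum_pow (n : ℕ)
    (hn : ¬((Fintype.card F - 1) ∣ n ∧ n ≠ 0)) : ∑ x : F, x ^ n = 0 := by
  classical
  by_cases h0 : n = 0
  · subst h0
    simp [FiniteField.cast_card_eq_zero]
  · have hdvd : ¬ (Fintype.card F - 1) ∣ n := by tauto
    let φ : Fˣ ↪ F := ⟨fun x ↦ x, fun _ _ h => Units.ext h⟩
    have hmap : univ.map φ = univ \ {0} := by
      ext x
      simp only [mem_map, mem_univ, Function.Embedding.coeFn_mk, true_and, mem_sdiff,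
        mem_singleton, φ]
      exact isUnit_iff_ne_zero
    calc
      ∑ x : F, x ^ n = ∑ x ∈ univ \ {(0:F)}, x ^ n := by
        rw [← Finset.sum_sdiff (Finset.singleton_subset_iff.mpr (Finset.mem_univ 0)),
          Finset.sum_singleton, zero_pow h0, add_zero]
      _ = ∑ x : Fˣ, (x ^ n : F) := by
        rw [← hmap, Finset.sum_map]; rfl
      _ = 0 := by rw [FiniteField.sum_pow_units F n, if_neg hdvd]

lemma klein_key_arith {Q a b c : ℕ} (h7 : ¬ 7 ∣ Q) (habc : a + b + c = Q)
    (h1 : Q ∣ 3*a + c) (h2 : Q ∣ a + 3*b) (h3 : Q ∣ b + 3*c)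
    (p1 : 0 < 3*a + c) (p2 : 0 < a + 3*b) (p3 : 0 < b + 3*c) : False := by
  have cop : Nat.Coprime Q 7 :=
    Nat.coprime_comm.mp ((Nat.Prime.coprime_iff_not_dvd (by norm_num)).mpr h7)
  have da : Q ∣ a := by
    have hda : Q ∣ 7*a := by
      have h := Nat.dvd_sub (dvd_add (Dvd.dvd.mul_left h1 3) h2) (Dvd.intro 3 rfl)
      have e : 3*(3*a+c) + (a+3*b) - Q*3 = 7*a := by omega
      rwa [e] at h
    exact cop.dvd_of_dvd_mul_left hda
  have db : Q ∣ b := by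
    have hdb : Q ∣ 7*b := by
      have h := Nat.dvd_sub (dvd_add (Dvd.dvd.mul_left h2 3) h3) (Dvd.intro 3 rfl)
      have e : 3*(a+3*b) + (b+3*c) - Q*3 = 7*b := by omega
      rwa [e] at h
    exact cop.dvd_of_dvd_mul_left hdb
  have dc : Q ∣ c := by
    have hdc : Q ∣ 7*c := by
      have h := Nat.dvd_sub (dvd_add (Dvd.dvd.mul_left h3 3) h1) (Dvd.intro 3 rfl)
      have e : 3*(b+3*c) + (3*a+c) - Q*3 = 7*c := by omega
      rwa [e] at h
    exact cop.dvd_of_dvd_mul_left hdc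
  have key : ∀ x : ℕ, Q ∣ x → x ≤ Q → x = 0 ∨ x = Q := by
    intro x hx hle
    rcases Nat.lt_or_ge x Q with h | h
    · exact Or.inl (Nat.eq_zero_of_dvd_of_lt hx h)
    · exact Or.inr (by omega)
  rcases key a da (by omega) with rfl | rfl <;>
    rcases key b db (by omega) with rfl | rfl <;> omega

omit [Fintype F] in
lemma klein_expand_pow (Q : ℕ) (x y z : F) :
    (x^3*y + y^3*z + z^3*x)^Q = ∑ k ∈ range (Q+1), ∑ j ∈ range (k+1),
      ((Q.choose k * k.choose j : ℕ) : F) *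
        (x^(3*j+(Q-k)) * (y^(j+3*(k-j)) * z^((k-j)+3*(Q-k)))) := by
  rw [add_pow]
  refine Finset.sum_congr rfl fun k hk => ?_
  rw [add_pow, Finset.sum_mul, Finset.sum_mul]
  refine Finset.sum_congr rfl fun j hj => ?_
  push_cast
  ring

lemma klein_triple_factor (c : F) (X Y Z : F → F) :
    (∑ x : F, ∑ y : F, ∑ z : F, c * (X x * (Y y * Z z)))
      = c * ((∑ x : F, X x) * ((∑ y : F, Y y) * (∑ z : F, Z z))) := by
  simp only [← Finset.mul_sum, ← Finset.sum_mul]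

lemma klein_swap {F M : Type*} [Fintype F] [AddCommMonoid M]
    (s : Finset ℕ) (t : ℕ → Finset ℕ) (g : ℕ → ℕ → F → F → F → M) :
    (∑ x : F, ∑ y : F, ∑ z : F, ∑ k ∈ s, ∑ j ∈ t k, g k j x y z)
      = ∑ k ∈ s, ∑ j ∈ t k, ∑ x : F, ∑ y : F, ∑ z : F, g k j x y z := by
  calc (∑ x : F, ∑ y : F, ∑ z : F, ∑ k ∈ s, ∑ j ∈ t k, g k j x y z)
      = ∑ x : F, ∑ y : F, ∑ z : F, ∑ p ∈ s.sigma t, g p.1 p.2 x y z :=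
        Finset.sum_congr rfl fun x _ => Finset.sum_congr rfl fun y _ =>
          Finset.sum_congr rfl fun z _ => Finset.sum_sigma' s t _
    _ = ∑ x : F, ∑ y : F, ∑ p ∈ s.sigma t, ∑ z : F, g p.1 p.2 x y z :=
        Finset.sum_congr rfl fun x _ => Finset.sum_congr rfl fun y _ => Finset.sum_comm
    _ = ∑ x : F, ∑ p ∈ s.sigma t, ∑ y : F, ∑ z : F, g p.1 p.2 x y z :=
        Finset.sum_congr rfl fun x _ => Finset.sum_comm
    _ = ∑ p ∈ s.sigma t, ∑ x : F, ∑ y : F, ∑ z : F, g p.1 p.2 x y z := Finset.sum_comm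
    _ = ∑ k ∈ s, ∑ j ∈ t k, ∑ x : F, ∑ y : F, ∑ z : F, g k j x y z :=
        Finset.sum_sigma s t _

lemma klein_S_zero (hd : ¬ 7 ∣ (Fintype.card F - 1)) :
    (∑ x : F, ∑ y : F, ∑ z : F,
      (x^3*y + y^3*z + z^3*x)^(Fintype.card F - 1)) = 0 := by
  set Q := Fintype.card F - 1 with hQdef
  calc (∑ x : F, ∑ y : F, ∑ z : F, (x^3*y + y^3*z + z^3*x)^Q)
      = ∑ x : F, ∑ y : F, ∑ z : F, ∑ k ∈ range (Q+1), ∑ j ∈ range (k+1),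
          ((Q.choose k * k.choose j : ℕ) : F) *
            (x^(3*j+(Q-k)) * (y^(j+3*(k-j)) * z^((k-j)+3*(Q-k)))) :=
        Finset.sum_congr rfl fun x _ => Finset.sum_congr rfl fun y _ =>
          Finset.sum_congr rfl fun z _ => klein_expand_pow Q x y z
    _ = ∑ k ∈ range (Q+1), ∑ j ∈ range (k+1), ∑ x : F, ∑ y : F, ∑ z : F,
          ((Q.choose k * k.choose j : ℕ) : F) *
            (x^(3*j+(Q-k)) * (y^(j+3*(k-j)) * z^((k-j)+3*(Q-k)))) :=
        klein_swap _ _ _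
    _ = 0 := by
        refine Finset.sum_eq_zero fun k hk => Finset.sum_eq_zero fun j hj => ?_
        rw [klein_triple_factor ((Q.choose k * k.choose j : ℕ) : F)
          (fun x => x^(3*j+(Q-k))) (fun y => y^(j+3*(k-j)))
          (fun z => z^((k-j)+3*(Q-k)))]
        simp only [mem_range, Nat.lt_succ_iff] at hk hj
        by_cases h1 : Q ∣ (3*j+(Q-k)) ∧ (3*j+(Q-k)) ≠ 0
        · by_cases h2 : Q ∣ (j+3*(k-j)) ∧ (j+3*(k-j)) ≠ 0
          · by_cases h3 : Q ∣ ((k-j)+3*(Q-k)) ∧ ((k-j)+3*(Q-k)) ≠ 0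
            · exact (klein_key_arith (a := j) (b := k - j)
                (c := Q - k) hd (by omega) h1.1 h2.1 h3.1
                (Nat.pos_of_ne_zero h1.2) (Nat.pos_of_ne_zero h2.2)
                (Nat.pos_of_ne_zero h3.2)).elim
            · rw [klein_sum_pow _ h3]; ring
          · rw [klein_sum_pow _ h2]; ring
        · rw [klein_sum_pow _ h1]; ring

lemma klein_card_shell :
    Nat.card {v : Fin 3 → F // kleinKQ v = 0 ∧ v ≠ 0}
      = (Fintype.card F - 1) *
        Nat.card {P : Projectivization F (Fin 3 → F) // kleinKQ P.rep = 0} := by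
  classical
  let f : Fˣ × {P : Projectivization F (Fin 3 → F) // kleinKQ P.rep = 0} →
      {v : Fin 3 → F // kleinKQ v = 0 ∧ v ≠ 0} :=
    fun cp => ⟨(cp.1 : F) • cp.2.1.rep,
      by rw [kleinKQ_smul, cp.2.2, mul_zero],
      smul_ne_zero cp.1.ne_zero cp.2.1.rep_nonzero⟩
  have hf : Function.Bijective f := by
    constructor
    · rintro ⟨c, P, hP⟩ ⟨d, R, hR⟩ h
      have heq : (c : F) • P.rep = (d : F) • R.rep := congrArg Subtype.val h
      have hPR : P = R := by
        rw [← P.mk_rep, ← R.mk_rep, Projectivization.mk_eq_mk_iff']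
        refine ⟨(c : F)⁻¹ * d, ?_⟩
        rw [mul_smul, ← heq, smul_smul, inv_mul_cancel₀ c.ne_zero, one_smul]
      subst hPR
      have hcd : (c : F) = d := by
        obtain ⟨i, hi⟩ := Function.ne_iff.mp P.rep_nonzero
        have h2 := congrFun heq i
        simp only [Pi.smul_apply, smul_eq_mul] at h2
        exact mul_right_cancel₀ hi h2
      simp only [Prod.mk.injEq]
      exact ⟨Units.ext hcd, trivial⟩
    · rintro ⟨v, hkq, hne⟩
      set P := Projectivization.mk F v hne with hPdef
      have hmk : Projectivization.mk F P.rep P.rep_nonzero = Projectivization.mk F v hne :=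
        Projectivization.mk_rep _
      obtain ⟨a, ha⟩ := (Projectivization.mk_eq_mk_iff F _ _ _ hne).mp hmk
      have hPrep : kleinKQ P.rep = 0 := by
        rw [← ha, Units.smul_def, kleinKQ_smul, hkq, mul_zero]
      obtain ⟨b, hb⟩ :=
        (Projectivization.mk_eq_mk_iff F v P.rep hne P.rep_nonzero).mp hmk.symm
      exact ⟨(b, ⟨P, hPrep⟩), Subtype.ext (by simpa [f, Units.smul_def] using hb)⟩
  rw [← Nat.card_eq_of_bijective f hf, Nat.card_prod]
  congr 1
  rw [Nat.card_eq_fintype_card, Fintype.card_units]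

/-- The coordinate equivalence. -/
def kleinE3 {F : Type*} : (Fin 3 → F) ≃ F × F × F where
  toFun v := (v 0, v 1, v 2)
  invFun p := ![p.1, p.2.1, p.2.2]
  left_inv v := by funext i; fin_cases i <;> rfl
  right_inv p := rfl

end KleinAux

/-- The number of points of the Klein quartic `x³y + y³z + z³x = 0` in the projective
plane over a finite field `F` of characteristic `p ≠ 7` with `7 ∤ (q - 1)` is congruent
to `1` modulo `p`. (Since the defining polynomial is homogeneous, vanishing at the chosen
representative of a projective point is independent of the representative.) -/
theorem klein_quartic_card_mod_char {F : Type*} [Field F] [Fintype F]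
    (hp7 : ringChar F ≠ 7) (hdvd : ¬ (7 ∣ Fintype.card F - 1)) :
    Nat.card {P : Projectivization F (Fin 3 → F) //
        (P.rep 0) ^ 3 * P.rep 1 + (P.rep 1) ^ 3 * P.rep 2 + (P.rep 2) ^ 3 * P.rep 0 = 0}
      ≡ 1 [MOD ringChar F] := by
  classical
  haveI := ringChar.charP F
  show Nat.card {P : Projectivization F (Fin 3 → F) // kleinKQ P.rep = 0}
      ≡ 1 [MOD ringChar F]
  set M := Nat.card {P : Projectivization F (Fin 3 → F) // kleinKQ P.rep = 0} with hM
  have hq2 : 1 < Fintype.card F := Fintype.one_lt_card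
  have hQ0 : Fintype.card F - 1 ≠ 0 := by omega
  -- the affine count
  have hNS : Nat.card {v : Fin 3 → F // kleinKQ v = 0 ∧ v ≠ 0}
      = (Fintype.card F - 1) * M := klein_card_shell
  have hfin : (univ.filter fun v : Fin 3 → F => kleinKQ v = 0).card
      = (Fintype.card F - 1) * M + 1 := by
    have h1 : (univ.filter fun v : Fin 3 → F => kleinKQ v = 0)
        = insert (0 : Fin 3 → F) (univ.filter fun v => kleinKQ v = 0 ∧ v ≠ 0) := by
      ext v
      simp only [mem_filter, mem_univ, true_and, mem_insert]
      constructor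
      · intro h
        by_cases hv : v = 0
        · exact Or.inl hv
        · exact Or.inr ⟨h, hv⟩
      · rintro (rfl | ⟨h, _⟩)
        · simp [kleinKQ]
        · exact h
    rw [h1, card_insert_of_notMem (by simp), ← hNS, Nat.card_eq_fintype_card,
      Fintype.card_subtype]
  -- character sum evaluation
  have hsum0 : ∑ v : Fin 3 → F, kleinKQ v ^ (Fintype.card F - 1) = 0 := by
    calc ∑ v : Fin 3 → F, kleinKQ v ^ (Fintype.card F - 1)
        = ∑ p : F × F × F,
            (p.1^3*p.2.1 + p.2.1^3*p.2.2 + p.2.2^3*p.1)^(Fintype.card F - 1) :=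
          Fintype.sum_equiv kleinE3 _ _ (fun v => rfl)
      _ = ∑ x : F, ∑ y : F, ∑ z : F,
            (x^3*y + y^3*z + z^3*x)^(Fintype.card F - 1) := by
          simp only [Fintype.sum_prod_type]
      _ = 0 := klein_S_zero hdvd
  have hQpow : ∀ v : Fin 3 → F,
      (1 : F) - kleinKQ v ^ (Fintype.card F - 1) = if kleinKQ v = 0 then 1 else 0 := by
    intro v
    split_ifs with h
    · rw [h, zero_pow hQ0, sub_zero]
    · rw [FiniteField.pow_card_sub_one_eq_one _ h, sub_self]
  have hcast : (((Fintype.card F - 1) * M + 1 : ℕ) : F) = 0 := by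
    rw [← hfin]
    calc ((univ.filter fun v : Fin 3 → F => kleinKQ v = 0).card : F)
        = ∑ v : Fin 3 → F, if kleinKQ v = 0 then (1:F) else 0 :=
          (Finset.sum_boole _ _).symm
      _ = ∑ v : Fin 3 → F, ((1:F) - kleinKQ v ^ (Fintype.card F - 1)) :=
          Finset.sum_congr rfl fun v _ => (hQpow v).symm
      _ = (∑ _v : Fin 3 → F, (1:F)) - ∑ v : Fin 3 → F, kleinKQ v ^ (Fintype.card F - 1) :=
          Finset.sum_sub_distrib _ _
      _ = 0 := by
          rw [hsum0, sub_zero, Finset.sum_const, card_univ, nsmul_eq_mul, mul_one]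
          have : Fintype.card (Fin 3 → F) = Fintype.card F ^ 3 := by
            simp [Fintype.card_fun]
          rw [this]
          push_cast
          rw [FiniteField.cast_card_eq_zero]
          ring
  have hM1 : ((M : ℕ) : F) = ((1 : ℕ) : F) := by
    have h1q : (1 : ℕ) ≤ Fintype.card F := Fintype.card_pos
    push_cast [Nat.cast_sub h1q] at hcast
    rw [FiniteField.cast_card_eq_zero] at hcast
    push_cast
    linear_combination -hcast
  exact (CharP.natCast_eq_natCast F (ringChar F)).mp hM1
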